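/- Suppose ν̂ and ν̂' are continuous SL(2,ℂ)-valued functions on the closed unit disk, holomorphic in the open disk, satisfying ν̂(γ)ν̂ᵀ(1/γ) = ν̂'(γ)ν̂'ᵀ(1/γ) for all |γ| = 1. Then K := ν̂⁻¹(γ)ν̂'(γ) is a constant matrix independent of γ, and K is orthogonal (KKᵀ = I). -/

import Mathlib

open Matrix

open Metric Real Complex intervalIntegral Set

private lemma core (a b : ℂ → ℂ)
    (hac : ContinuousOn a (closedBall 0 1)) (had : DifferentiableOn ℂ a (ball 0 1))
    (hbc : ContinuousOn b (closedBall 0 1)) (hbd : DifferentiableOn ℂ b (ball 0 1))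
    (hrel : ∀ γ : ℂ, ‖γ‖ = 1 → a γ = b γ⁻¹) :
    ∀ z ∈ closedBall (0:ℂ) 1, a z = b 0 := by
  have habs : ∀ θ : ℝ, ‖circleMap 0 1 θ‖ = 1 := by simp
  have hmem : ∀ θ : ℝ, circleMap 0 1 θ ∈ closedBall (0:ℂ) 1 := fun θ => by
    simp [Complex.dist_eq, habs θ]
  have hme : ∀ θ : ℝ, circleMap 0 1 θ * circleMap 0 1 (-θ) = 1 := fun θ => by
    simp [circleMap, ← Complex.exp_add]
  have hne : ∀ θ : ℝ, circleMap 0 1 θ ≠ 0 := fun θ h => by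
    simpa [h] using hme θ
  have hinv : ∀ θ : ℝ, (circleMap 0 1 θ)⁻¹ = circleMap 0 1 (-θ) := fun θ =>
    inv_eq_of_mul_eq_one_right (hme θ)
  -- continuity of b ∘ circleMap
  have hbe : Continuous fun θ : ℝ => b (circleMap 0 1 θ) :=
    hbc.comp_continuous (continuous_circleMap 0 1) hmem
  have hball : ∀ z ∈ ball (0:ℂ) 1, a z = b 0 := by
    intro z hz
    have hzn : ‖z‖ < 1 := by simpa [Complex.dist_eq] using hz
    have hd1 : ∀ w : ℂ, ‖w‖ ≤ 1 → 1 - z * w ≠ 0 := by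
      intro w hw h
      have : ‖z * w‖ < 1 := by
        rw [norm_mul]
        calc ‖z‖ * ‖w‖ ≤ ‖z‖ * 1 :=
          mul_le_mul_of_nonneg_left hw (norm_nonneg z)
        _ < 1 := by simpa using hzn
      rw [sub_eq_zero] at h
      simp [← h] at this
    -- Cauchy formula for a at z
    have hA : (∮ w in C(0,1), (w - z)⁻¹ • a w) = (2 * π * Complex.I) • a z :=
      Complex.circleIntegral_sub_inv_smul_of_differentiable_on_off_countable countable_empty hz hac
        (fun x hx => had.differentiableAt (isOpen_ball.mem_nhds hx.1))
    -- Cauchy formula for b at 0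
    have hB : (∮ w in C(0,1), (w - 0)⁻¹ • b w) = (2 * π * Complex.I) • b 0 :=
      Complex.circleIntegral_sub_inv_smul_of_differentiable_on_off_countable countable_empty
        (by simp) hbc (fun x hx => hbd.differentiableAt (isOpen_ball.mem_nhds hx.1))
    -- vanishing integral
    have hC : (∮ w in C(0,1), z * ((1 - z * w)⁻¹ * b w)) = 0 := by
      apply Complex.circleIntegral_eq_zero_of_differentiable_on_off_countable zero_le_one
        countable_empty
      · apply ContinuousOn.mul continuousOn_const
        apply ContinuousOn.mul _ hbc
        apply ContinuousOn.inv₀ (by fun_prop)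
        intro w hw
        exact hd1 w (by simpa [Complex.dist_eq] using hw)
      · intro w hw
        have hw1 : ‖w‖ ≤ 1 := le_of_lt (by simpa [Complex.dist_eq] using hw.1)
        apply DifferentiableAt.mul (differentiableAt_const z)
        apply DifferentiableAt.mul
        · exact ((differentiableAt_const _).sub ((differentiableAt_const z).mul
            differentiableAt_id)).inv (hd1 w hw1)
        · exact hbd.differentiableAt (isOpen_ball.mem_nhds hw.1)
    -- the key change of variables
    set F : ℝ → ℂ := fun θ => Complex.I * ((1 - z * circleMap 0 1 θ)⁻¹ * b (circleMap 0 1 θ))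
      with hF
    have hFper : Function.Periodic F (2 * π) :=
      Function.Periodic.comp (periodic_circleMap 0 1)
        (fun w => Complex.I * ((1 - z * w)⁻¹ * b w))
    have key : (∮ w in C(0,1), (w - z)⁻¹ • a w)
        = (∮ w in C(0,1), (w - 0)⁻¹ • b w) + ∮ w in C(0,1), z * ((1 - z * w)⁻¹ * b w) := by
      have h1 : (∮ w in C(0,1), (w - z)⁻¹ • a w) = ∫ θ in (0:ℝ)..2*π, F (-θ) := by
        rw [circleIntegral]
        congr 1; funext θ
        rw [deriv_circleMap, hrel _ (habs θ), hinv θ]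
        have h2 : (1 - z * circleMap 0 1 (-θ)) * circleMap 0 1 θ = circleMap 0 1 θ - z := by
          linear_combination (-z) * hme θ
        have h3 : circleMap 0 1 θ - z ≠ 0 := by
          intro h; rw [sub_eq_zero] at h; rw [← h] at hzn; simp [habs θ] at hzn
        have h4 : (1 - z * circleMap 0 1 (-θ)) ≠ 0 := by
          intro h; rw [h, zero_mul] at h2; exact h3 h2.symm
        simp only [hF, smul_eq_mul]
        field_simp
        rw [← h2]; ring
      have h2 : ∫ θ in (0:ℝ)..2*π, F (-θ) = ∫ θ in (0:ℝ)..2*π, F θ := by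
        rw [intervalIntegral.integral_comp_neg F]
        have := hFper.intervalIntegral_add_eq (-(2*π)) 0
        simpa using this
      have h3 : (∮ w in C(0,1), (w - 0)⁻¹ • b w) + (∮ w in C(0,1), z * ((1 - z * w)⁻¹ * b w))
          = ∫ θ in (0:ℝ)..2*π, F θ := by
        rw [circleIntegral, circleIntegral, ← intervalIntegral.integral_add]
        · congr 1; funext θ
          rw [deriv_circleMap]
          have h4 : (1 - z * circleMap 0 1 θ) ≠ 0 := hd1 _ (le_of_eq (habs θ))
          have h4' : (1 - circleMap 0 1 θ * z) ≠ 0 := by rwa [mul_comm]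
          simp only [hF, smul_eq_mul, sub_zero]
          field_simp
          ring
        · apply Continuous.intervalIntegrable
          have : Continuous fun θ : ℝ => (circleMap 0 1 θ)⁻¹ := by
            simp only [hinv]
            exact (continuous_circleMap 0 1).comp continuous_neg
          simp only [deriv_circleMap, smul_eq_mul, sub_zero]
          exact (((continuous_circleMap 0 1).mul continuous_const).mul (this.mul hbe))
        · apply Continuous.intervalIntegrable
          have cinv2 : Continuous fun θ : ℝ => (1 - z * circleMap 0 1 θ)⁻¹ :=
            Continuous.inv₀ (by fun_prop) (fun θ => hd1 _ (le_of_eq (habs θ)))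
          simp only [deriv_circleMap, smul_eq_mul]
          exact ((continuous_circleMap 0 1).mul continuous_const).mul
            (continuous_const.mul (cinv2.mul hbe))
      rw [h1, h2, ← h3]
    rw [hA, hB, hC, add_zero] at key
    have h2pi : (2 * (π:ℂ) * Complex.I) ≠ 0 := by
      simp [Real.pi_ne_zero, Complex.I_ne_zero]
    simp only [smul_eq_mul] at key
    exact mul_left_cancel₀ h2pi key
  intro z hz
  have hzc : z ∈ closure (ball (0:ℂ) 1) := by
    rwa [closure_ball (0:ℂ) one_ne_zero]
  have hnb : (nhdsWithin z (ball (0:ℂ) 1)).NeBot := mem_closure_iff_nhdsWithin_neBot.mp hzc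
  have h1 : Filter.Tendsto a (nhdsWithin z (ball 0 1)) (nhds (a z)) :=
    ((hac z hz).mono_left (nhdsWithin_mono _ ball_subset_closedBall))
  have h2 : Filter.Tendsto a (nhdsWithin z (ball 0 1)) (nhds (b 0)) := by
    apply Filter.Tendsto.congr' _ tendsto_const_nhds
    filter_upwards [self_mem_nhdsWithin] with w hw
    exact (hball w hw).symm
  exact tendsto_nhds_unique h1 h2

/-- Suppose `ν̂` and `ν̂'` are continuous `SL(2,ℂ)`-valued functions on the closed unit
disk, holomorphic in the open disk, with `ν̂(γ)ν̂ᵀ(1/γ) = ν̂'(γ)ν̂'ᵀ(1/γ)` on `|γ| = 1`.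
Then `K := ν̂⁻¹(γ)ν̂'(γ)` is a constant matrix independent of `γ`, and `K` is orthogonal
(`KKᵀ = 1`). -/
theorem stmt_14 (ν ν' : ℂ → Matrix (Fin 2) (Fin 2) ℂ)
    (hνc : ∀ i j : Fin 2, ContinuousOn (fun γ => ν γ i j) {γ : ℂ | ‖γ‖ ≤ 1})
    (hν'c : ∀ i j : Fin 2, ContinuousOn (fun γ => ν' γ i j) {γ : ℂ | ‖γ‖ ≤ 1})
    (hνh : ∀ i j : Fin 2, DifferentiableOn ℂ (fun γ => ν γ i j) {γ : ℂ | ‖γ‖ < 1})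
    (hν'h : ∀ i j : Fin 2, DifferentiableOn ℂ (fun γ => ν' γ i j) {γ : ℂ | ‖γ‖ < 1})
    (hνdet : ∀ γ : ℂ, ‖γ‖ ≤ 1 → (ν γ).det = 1)
    (hν'det : ∀ γ : ℂ, ‖γ‖ ≤ 1 → (ν' γ).det = 1)
    (hfact : ∀ γ : ℂ, ‖γ‖ = 1 →
      ν γ * (ν (1 / γ))ᵀ = ν' γ * (ν' (1 / γ))ᵀ) :
    ∃ K : Matrix (Fin 2) (Fin 2) ℂ,
      (∀ γ : ℂ, ‖γ‖ ≤ 1 → (ν γ)⁻¹ * ν' γ = K) ∧ K * Kᵀ = 1 := by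
  have hSle : {γ : ℂ | ‖γ‖ ≤ 1} = Metric.closedBall 0 1 := by
    ext w; simp [Complex.dist_eq]
  have hSlt : {γ : ℂ | ‖γ‖ < 1} = Metric.ball 0 1 := by
    ext w; simp [Complex.dist_eq]
  -- inverse = adjugate for det-1 matrices
  have hadj : ∀ M : Matrix (Fin 2) (Fin 2) ℂ, M.det = 1 → M⁻¹ = M.adjugate := by
    intro M h
    rw [Matrix.inv_def, h, Ring.inverse_one, one_smul]
  set A : ℂ → Matrix (Fin 2) (Fin 2) ℂ := fun γ => (ν γ).adjugate * ν' γ with hA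
  set B : ℂ → Matrix (Fin 2) (Fin 2) ℂ := fun γ => ((ν' γ).adjugate * ν γ)ᵀ with hB
  -- entrywise regularity
  have hAc : ∀ i j : Fin 2, ContinuousOn (fun γ => A γ i j) (Metric.closedBall 0 1) := by
    rw [← hSle]
    intro i j
    simp only [hA, Matrix.mul_apply, Fin.sum_univ_two, Matrix.adjugate_fin_two]
    fin_cases i <;> fin_cases j <;> simp <;> fun_prop
  have hAd : ∀ i j : Fin 2, DifferentiableOn ℂ (fun γ => A γ i j) (Metric.ball 0 1) := by
    rw [← hSlt]
    intro i j
    simp only [hA, Matrix.mul_apply, Fin.sum_univ_two, Matrix.adjugate_fin_two]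
    fin_cases i <;> fin_cases j <;> simp <;> fun_prop
  have hBc : ∀ i j : Fin 2, ContinuousOn (fun γ => B γ i j) (Metric.closedBall 0 1) := by
    rw [← hSle]
    intro i j
    simp only [hB, Matrix.transpose_apply, Matrix.mul_apply, Fin.sum_univ_two,
      Matrix.adjugate_fin_two]
    fin_cases i <;> fin_cases j <;> simp <;> fun_prop
  have hBd : ∀ i j : Fin 2, DifferentiableOn ℂ (fun γ => B γ i j) (Metric.ball 0 1) := by
    rw [← hSlt]
    intro i j
    simp only [hB, Matrix.transpose_apply, Matrix.mul_apply, Fin.sum_univ_two,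
      Matrix.adjugate_fin_two]
    fin_cases i <;> fin_cases j <;> simp <;> fun_prop
  -- boundary relation
  have hbdry : ∀ γ : ℂ, ‖γ‖ = 1 → A γ = B γ⁻¹ := by
    intro γ hγ
    have hγ0 : γ ≠ 0 := by
      intro h; rw [h] at hγ; simp at hγ
    have hγ' : ‖1/γ‖ = 1 := by
      rw [norm_div, hγ]; simp
    have hd1 : (ν γ).det = 1 := hνdet γ hγ.le
    have hd2 : (ν' γ).det = 1 := hν'det γ hγ.le
    have hd3 : (ν (1/γ)).det = 1 := hνdet _ hγ'.le
    have hd4 : (ν' (1/γ)).det = 1 := hν'det _ hγ'.le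
    have hu : ∀ M : Matrix (Fin 2) (Fin 2) ℂ, M.det = 1 → IsUnit M.det := by
      intro M h; rw [h]; exact isUnit_one
    have key : (ν γ)⁻¹ * ν' γ = (ν (1/γ))ᵀ * ((ν' (1/γ))ᵀ)⁻¹ := by
      have h1 : (ν γ)⁻¹ * (ν γ * (ν (1/γ))ᵀ) * ((ν' (1/γ))ᵀ)⁻¹
          = (ν (1/γ))ᵀ * ((ν' (1/γ))ᵀ)⁻¹ := by
        rw [← mul_assoc, Matrix.nonsing_inv_mul _ (hu _ hd1), one_mul]
      rw [hfact γ hγ] at h1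
      rw [← h1, mul_assoc, mul_assoc, Matrix.mul_nonsing_inv _
        (by rw [Matrix.det_transpose, hd4]; exact isUnit_one), mul_one]
    have h2 : A γ = (ν γ)⁻¹ * ν' γ := by rw [hA, hadj _ hd1]
    have h3 : B γ⁻¹ = (ν (1/γ))ᵀ * ((ν' (1/γ))ᵀ)⁻¹ := by
      have e : γ⁻¹ = 1/γ := (one_div γ).symm
      rw [hB]
      simp only [e]
      rw [← hadj _ hd4, Matrix.transpose_mul, Matrix.transpose_nonsing_inv]
    rw [h2, h3, key]
  have hone : ‖(1:ℂ)‖ = 1 := norm_one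
  have hentry : ∀ i j : Fin 2, ∀ z ∈ Metric.closedBall (0:ℂ) 1, A z i j = B 0 i j :=
    fun i j => core (fun γ => A γ i j) (fun γ => B γ i j) (hAc i j) (hAd i j) (hBc i j)
      (hBd i j) (fun γ hγ => by show A γ i j = B γ⁻¹ i j; rw [hbdry γ hγ])
  have hconst : ∀ z : ℂ, ‖z‖ ≤ 1 → A z = B 0 := by
    intro z hz
    ext i j
    exact hentry i j z (by simpa [Complex.dist_eq] using hz)
  have hu1 : IsUnit (ν 1).det := by rw [hνdet 1 hone.le]; exact isUnit_one
  have hu2 : IsUnit (ν' 1).det := by rw [hν'det 1 hone.le]; exact isUnit_one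
  have hK1 : B 0 = (ν 1)⁻¹ * ν' 1 := by
    rw [← hconst 1 hone.le, hA, hadj _ (hνdet 1 hone.le)]
  have hK2 : (B 0)ᵀ = (ν' 1)⁻¹ * ν 1 := by
    have : A 1 = B 1 := by
      have := hbdry 1 hone
      rwa [inv_one] at this
    rw [← hconst 1 hone.le, this]
    simp only [hB]
    rw [← hadj _ (hν'det 1 hone.le), Matrix.transpose_transpose]
  refine ⟨B 0, ?_, ?_⟩
  · intro γ hγ
    rw [hadj _ (hνdet γ hγ)]
    exact hconst γ hγ
  · rw [hK2, hK1, mul_assoc, ← mul_assoc (ν' 1), Matrix.mul_nonsing_inv _ hu2, one_mul,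
      Matrix.nonsing_inv_mul _ hu1]
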